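/- Let ρ, σ be density matrices on an n-partite Hilbert space with p(z) = (1/2^n) ∑_S (-1)^(|S ∩ supp(z)|) Tr(ρ_S σ_S). Then p(z) = 1/2^n for all z ∈ {0,1}^n if and only if ρ_T σ_T = 0 (the zero operator) for every nonempty T ⊆ [n]. -/

import Mathlib

open Finset ComplexOrder
open scoped Matrix symmDiff


lemma psd_sum {m ι : Type*} [Fintype m] [DecidableEq m] (s : Finset ι)
    (M : ι → Matrix m m ℂ) (h : ∀ i ∈ s, (M i).PosSemidef) :
    (∑ i ∈ s, M i).PosSemidef :=
  Finset.sum_induction M Matrix.PosSemidef (fun _ _ ha hb => ha.add hb) Matrix.PosSemidef.zero h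

lemma trace_ct_mul_self {m k : Type*} [Fintype m] [Fintype k] [DecidableEq m] [DecidableEq k]
    (A : Matrix m k ℂ) (h : (Aᴴ * A).trace = 0) : A = 0 := by
  have key : ∀ j : k, (Aᴴ * A) j j = dotProduct (star (fun i => A i j)) (fun i => A i j) := by
    intro j
    simp [Matrix.mul_apply, dotProduct, Matrix.conjTranspose_apply]
  have hd : ∀ j : k, (Aᴴ * A) j j = 0 := by
    have hnn : ∀ j ∈ Finset.univ (α := k), 0 ≤ (Aᴴ * A) j j := fun j _ => by
      rw [key j]; exact dotProduct_star_self_nonneg _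
    intro j
    exact (Finset.sum_eq_zero_iff_of_nonneg hnn).mp h j (Finset.mem_univ j)
  ext i j
  have := dotProduct_star_self_eq_zero.mp ((key j).symm.trans (hd j))
  simpa using congr_fun this i

open scoped MatrixOrder in
lemma psd_mul_eq_zero {m : Type*} [Fintype m] [DecidableEq m] {A B : Matrix m m ℂ}
    (hA : A.PosSemidef) (hB : B.PosSemidef) (h : (A * B).trace = 0) : A * B = 0 := by
  set a := CFC.sqrt A with ha
  set b := CFC.sqrt B with hb
  have hab : (a * b)ᴴ = b * a := by
    rw [Matrix.conjTranspose_mul, (Matrix.nonneg_iff_posSemidef.mp (CFC.sqrt_nonneg A)).1, (Matrix.nonneg_iff_posSemidef.mp (CFC.sqrt_nonneg B)).1]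
  have htr : ((a * b)ᴴ * (a * b)).trace = 0 := by
    rw [hab]
    calc ((b * a) * (a * b)).trace = ((b * (a * a)) * b).trace := by
            rw [Matrix.mul_assoc, Matrix.mul_assoc, Matrix.mul_assoc]
      _ = (b * ((a * a) * b)).trace := by rw [Matrix.mul_assoc]
      _ = (((a * a) * b) * b).trace := Matrix.trace_mul_comm _ _
      _ = ((a * a) * (b * b)).trace := by rw [Matrix.mul_assoc]
      _ = (A * B).trace := by rw [CFC.sqrt_mul_sqrt_self A hA.nonneg, CFC.sqrt_mul_sqrt_self B hB.nonneg]
      _ = 0 := h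
  have h0 : a * b = 0 := trace_ct_mul_self _ htr
  have : A * B = a * (a * b) * b := by
    rw [← CFC.sqrt_mul_sqrt_self A hA.nonneg, ← CFC.sqrt_mul_sqrt_self B hB.nonneg]
    noncomm_ring
  rw [this, h0, Matrix.mul_zero, Matrix.zero_mul]

lemma neg_one_pow_mod2 (a b : ℕ) (h : a % 2 = b % 2) : (-1 : ℂ) ^ a = (-1) ^ b := by
  conv_lhs => rw [← Nat.div_add_mod a 2]
  conv_rhs => rw [← Nat.div_add_mod b 2]
  rw [h, pow_add, pow_add, pow_mul, pow_mul]
  norm_num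

lemma fourier_sum {n : ℕ} (S : Finset (Fin n)) :
    ∑ z : Finset (Fin n), (-1 : ℂ) ^ (S ∩ z).card =
      if S = ∅ then (2 ^ n : ℂ) else 0 := by
  rcases eq_or_ne S ∅ with rfl | hS
  · simp [Fintype.card_finset]
  · rw [if_neg hS]
    obtain ⟨i, hi⟩ := Finset.nonempty_iff_ne_empty.mpr hS
    apply Finset.sum_ninvolution (fun z => if i ∈ z then z.erase i else insert i z)
    · intro z
      by_cases hz : i ∈ z
      · simp only [hz, if_true]
        rw [Finset.inter_erase, Finset.card_erase_of_mem (Finset.mem_inter.mpr ⟨hi, hz⟩)]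
        have hc : 1 ≤ (S ∩ z).card := Finset.card_pos.mpr ⟨i, Finset.mem_inter.mpr ⟨hi, hz⟩⟩
        rw [← Nat.succ_pred_eq_of_pos hc, pow_succ, Nat.succ_sub_one]
        ring
      · simp only [hz, if_false]
        rw [Finset.inter_insert_of_mem hi,
          Finset.card_insert_of_notMem (fun hc => hz (Finset.mem_inter.mp hc).2), pow_succ]
        ring
    · intro z _
      by_cases hz : i ∈ z
      · simp [hz, Finset.erase_eq_self]
      · simp [hz, Finset.insert_eq_self]
    · intro z; exact Finset.mem_univ _
    · intro z
      by_cases hz : i ∈ z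
      · simp [hz, Finset.notMem_erase, Finset.insert_erase hz]
      · simp [hz, Finset.mem_insert_self, Finset.erase_insert hz]

lemma card_inter_parity {n : ℕ} (S T z : Finset (Fin n)) :
    (-1 : ℂ) ^ (S ∩ z).card * (-1 : ℂ) ^ (T ∩ z).card = (-1 : ℂ) ^ ((S ∆ T) ∩ z).card := by
  rw [← pow_add]
  apply neg_one_pow_mod2
  have h1 : (S ∩ z).card + (T ∩ z).card
      = ((S ∩ z) ∆ (T ∩ z)).card + 2 * ((S ∩ z) ∩ (T ∩ z)).card := by
    have := Finset.card_union_add_card_inter (S ∩ z) (T ∩ z)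
    have h2 : ((S ∩ z) ∆ (T ∩ z)).card + ((S ∩ z) ∩ (T ∩ z)).card
        = ((S ∩ z) ∪ (T ∩ z)).card := by
      rw [← Finset.card_union_of_disjoint]
      · congr 1
        ext x
        simp only [Finset.mem_union, Finset.mem_symmDiff, Finset.mem_inter]
        tauto
      · rw [Finset.disjoint_left]
        intro x hx
        simp only [Finset.mem_symmDiff, Finset.mem_inter] at hx ⊢
        tauto
    omega
  have h3 : (S ∩ z) ∆ (T ∩ z) = (S ∆ T) ∩ z := by
    ext x
    simp only [Finset.mem_symmDiff, Finset.mem_inter]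
    tauto
  rw [← h3]
  omega


noncomputable def ptrace {n : ℕ} (d : Fin n → ℕ) (S : Finset (Fin n))
    (ρ : Matrix ((i : Fin n) → Fin (d i)) ((i : Fin n) → Fin (d i)) ℂ) :
    Matrix ((i : {j : Fin n // j ∈ S}) → Fin (d i.1))
           ((i : {j : Fin n // j ∈ S}) → Fin (d i.1)) ℂ :=
  fun x y => ∑ z : (i : {j : Fin n // j ∉ S}) → Fin (d i.1),
    ρ (fun i => if h : i ∈ S then x ⟨i, h⟩ else z ⟨i, h⟩)
      (fun i => if h : i ∈ S then y ⟨i, h⟩ else z ⟨i, h⟩)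

/-- `Tr(ρ_S σ_S)`, the overlap of the reduced states on `S`. -/
noncomputable def overlap {n : ℕ} (d : Fin n → ℕ) (S : Finset (Fin n))
    (ρ σ : Matrix ((i : Fin n) → Fin (d i)) ((i : Fin n) → Fin (d i)) ℂ) : ℂ :=
  (ptrace d S ρ * ptrace d S σ).trace

/-- A density matrix: positive semidefinite with unit trace. -/
def IsDensity {m : Type*} [Fintype m] [DecidableEq m] (ρ : Matrix m m ℂ) : Prop :=
  ρ.PosSemidef ∧ ρ.trace = 1

/-- In the `n`-qubit parallelized SWAP test of `ρ` and `σ` (bitstrings `z` identified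
with their supports), `p(z) = 1/2^n` for all `z` if and only if `ρ_T σ_T = 0` for every
nonempty `T ⊆ [n]`. -/


lemma ptrace_psd {n : ℕ} (d : Fin n → ℕ) (S : Finset (Fin n))
    {ρ : Matrix ((i : Fin n) → Fin (d i)) ((i : Fin n) → Fin (d i)) ℂ}
    (h : ρ.PosSemidef) : (ptrace d S ρ).PosSemidef := by
  have heq : ptrace d S ρ = ∑ z : (i : {j : Fin n // j ∉ S}) → Fin (d i.1),
      ρ.submatrix (fun x i => if h : i ∈ S then x ⟨i, h⟩ else z ⟨i, h⟩)
        (fun x i => if h : i ∈ S then x ⟨i, h⟩ else z ⟨i, h⟩) := by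
    ext x y
    simp [ptrace, Matrix.sum_apply, Matrix.submatrix_apply]
  rw [heq]
  exact psd_sum _ _ fun z _ => h.submatrix _

def eEmpty {n : ℕ} (d : Fin n → ℕ) :
    ((i : {j : Fin n // j ∉ (∅ : Finset (Fin n))}) → Fin (d i.1)) ≃ ((i : Fin n) → Fin (d i)) where
  toFun z i := z ⟨i, Finset.notMem_empty i⟩
  invFun w i := w i.1
  left_inv z := rfl
  right_inv w := rfl

lemma ptrace_empty_apply {n : ℕ} (d : Fin n → ℕ)
    (τ : Matrix ((i : Fin n) → Fin (d i)) ((i : Fin n) → Fin (d i)) ℂ)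
    (x y : (i : {j : Fin n // j ∈ (∅ : Finset (Fin n))}) → Fin (d i.1)) :
    ptrace d ∅ τ x y = τ.trace := by
  show (∑ z : (i : {j : Fin n // j ∉ (∅ : Finset (Fin n))}) → Fin (d i.1),
    τ (fun i => if h : i ∈ (∅ : Finset (Fin n)) then x ⟨i, h⟩ else z ⟨i, h⟩)
      (fun i => if h : i ∈ (∅ : Finset (Fin n)) then y ⟨i, h⟩ else z ⟨i, h⟩)) = τ.trace
  have hfun : ∀ (w : (i : {j : Fin n // j ∈ (∅ : Finset (Fin n))}) → Fin (d i.1))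
      (z : (i : {j : Fin n // j ∉ (∅ : Finset (Fin n))}) → Fin (d i.1)),
      (fun i => if h : i ∈ (∅ : Finset (Fin n)) then w ⟨i, h⟩ else z ⟨i, h⟩) = eEmpty d z := by
    intro w z
    funext i
    rw [dif_neg (Finset.notMem_empty i)]
    rfl
  simp_rw [hfun]
  exact Equiv.sum_comp (eEmpty d) (fun w => τ w w)

lemma overlap_empty {n : ℕ} (d : Fin n → ℕ)
    {ρ σ : Matrix ((i : Fin n) → Fin (d i)) ((i : Fin n) → Fin (d i)) ℂ}
    (hρ : ρ.trace = 1) (hσ : σ.trace = 1) : overlap d ∅ ρ σ = 1 := by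
  haveI : IsEmpty {j : Fin n // j ∈ (∅ : Finset (Fin n))} :=
    ⟨fun j => Finset.notMem_empty j.1 j.2⟩
  have hP : ∀ x y, ptrace d ∅ ρ x y = 1 := fun x y => by rw [ptrace_empty_apply, hρ]
  have hQ : ∀ x y, ptrace d ∅ σ x y = 1 := fun x y => by rw [ptrace_empty_apply, hσ]
  unfold overlap
  simp [Matrix.trace, Matrix.diag, Matrix.mul_apply, hP, hQ, Finset.card_univ]

theorem swap_test_uniform_iff_orthogonal {n : ℕ} (d : Fin n → ℕ)
    (ρ σ : Matrix ((i : Fin n) → Fin (d i)) ((i : Fin n) → Fin (d i)) ℂ)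
    (hρ : IsDensity ρ) (hσ : IsDensity σ) :
    (∀ z : Finset (Fin n),
        (1 / 2 ^ n : ℂ) * (∑ S : Finset (Fin n), (-1 : ℂ) ^ (S ∩ z).card * overlap d S ρ σ) =
          1 / 2 ^ n) ↔
      (∀ T : Finset (Fin n), T.Nonempty → ptrace d T ρ * ptrace d T σ = 0) := by
  have h2n : ((2 : ℂ) ^ n) ≠ 0 := pow_ne_zero _ two_ne_zero
  have hinv : ((1 : ℂ) / 2 ^ n) ≠ 0 := by
    simp [h2n]
  have hE : overlap d ∅ ρ σ = 1 := overlap_empty d hρ.2 hσ.2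
  constructor
  · intro h T hT
    have hkey : ∀ z : Finset (Fin n),
        ∑ S : Finset (Fin n), (-1 : ℂ) ^ (S ∩ z).card * overlap d S ρ σ = 1 := by
      intro z
      have := h z
      have h1 : (1 / 2 ^ n : ℂ) * (∑ S : Finset (Fin n),
          (-1 : ℂ) ^ (S ∩ z).card * overlap d S ρ σ) = (1 / 2 ^ n : ℂ) * 1 := by
        rw [mul_one]; exact this
      exact mul_left_cancel₀ hinv h1
    have hov : overlap d T ρ σ = 0 := by
      have hsum : ∑ z : Finset (Fin n), (-1 : ℂ) ^ (T ∩ z).card *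
          (∑ S : Finset (Fin n), (-1 : ℂ) ^ (S ∩ z).card * overlap d S ρ σ) =
          ∑ z : Finset (Fin n), (-1 : ℂ) ^ (T ∩ z).card := by
        simp_rw [hkey, mul_one]
      rw [fourier_sum T, if_neg (Finset.nonempty_iff_ne_empty.mp hT)] at hsum
      have hL : ∑ z : Finset (Fin n), (-1 : ℂ) ^ (T ∩ z).card *
          (∑ S : Finset (Fin n), (-1 : ℂ) ^ (S ∩ z).card * overlap d S ρ σ) =
          (2 ^ n : ℂ) * overlap d T ρ σ := by
        calc ∑ z : Finset (Fin n), (-1 : ℂ) ^ (T ∩ z).card *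
              (∑ S : Finset (Fin n), (-1 : ℂ) ^ (S ∩ z).card * overlap d S ρ σ)
            = ∑ z : Finset (Fin n), ∑ S : Finset (Fin n),
              (-1 : ℂ) ^ ((T ∆ S) ∩ z).card * overlap d S ρ σ := by
              refine Finset.sum_congr rfl fun z _ => ?_
              rw [Finset.mul_sum]
              refine Finset.sum_congr rfl fun S _ => ?_
              rw [← mul_assoc, card_inter_parity]
          _ = ∑ S : Finset (Fin n), (∑ z : Finset (Fin n),
              (-1 : ℂ) ^ ((T ∆ S) ∩ z).card) * overlap d S ρ σ := by
              rw [Finset.sum_comm]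
              exact Finset.sum_congr rfl fun S _ => by rw [Finset.sum_mul]
          _ = ∑ S : Finset (Fin n),
              (if T ∆ S = ∅ then (2 ^ n : ℂ) else 0) * overlap d S ρ σ := by
              refine Finset.sum_congr rfl fun S _ => by rw [fourier_sum]
          _ = (2 ^ n : ℂ) * overlap d T ρ σ := by
              rw [Finset.sum_eq_single T]
              · rw [if_pos (by simp)]
              · intro S _ hS
                rw [if_neg, zero_mul]
                rw [← Finset.bot_eq_empty, symmDiff_eq_bot]
                exact fun hc => hS hc.symm
              · intro hc; exact absurd (Finset.mem_univ T) hc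
      rw [hL] at hsum
      exact (mul_eq_zero.mp hsum).resolve_left h2n
    exact psd_mul_eq_zero (ptrace_psd d T hρ.1) (ptrace_psd d T hσ.1) hov
  · intro h z
    have hX : ∑ S : Finset (Fin n), (-1 : ℂ) ^ (S ∩ z).card * overlap d S ρ σ = 1 := by
      rw [Finset.sum_eq_single ∅]
      · simp [hE]
      · intro S _ hS
        have : overlap d S ρ σ = 0 := by
          rw [overlap, h S (Finset.nonempty_iff_ne_empty.mpr hS), Matrix.trace_zero]
        rw [this, mul_zero]
      · intro hc; exact absurd (Finset.mem_univ ∅) hc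
    rw [hX, mul_one]
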